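/- The unique fixed point V* of a Bellman operator B with rewards R(s,a) non-decreasing in s and stochastically monotone transition kernels is a non-decreasing function of s. -/

import Mathlib

open Finset

noncomputable def bellman {S A : Type*} [Fintype S] [Fintype A] [Nonempty A]
    (R : S → A → ℝ) (β : ℝ) (p : A → S → S → ℝ) (v : S → ℝ) (s : S) : ℝ :=
  Finset.univ.sup' Finset.univ_nonempty fun a =>
    R s a + β * ∑ s', p a s s' * v s'

lemma bellman_le_of_le {S A : Type*} [Fintype S] [Fintype A] [Nonempty A]
    (R : S → A → ℝ) (β : ℝ) (hβ : 0 ≤ β) (p : A → S → S → ℝ)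
    (hp0 : ∀ a s s', 0 ≤ p a s s') (hp1 : ∀ a s, ∑ s', p a s s' = 1)
    (f g : S → ℝ) (D : ℝ) (h : ∀ t, f t ≤ g t + D) (s : S) :
    bellman R β p f s ≤ bellman R β p g s + β * D := by
  unfold bellman
  apply Finset.sup'_le
  intro a _
  have h1 : ∑ s', p a s s' * f s' ≤ (∑ s', p a s s' * g s') + D := by
    calc ∑ s', p a s s' * f s'
        ≤ ∑ s', p a s s' * (g s' + D) :=
          Finset.sum_le_sum fun t _ => mul_le_mul_of_nonneg_left (h t) (hp0 a s t)
      _ = (∑ s', p a s s' * g s') + (∑ s', p a s s') * D := by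
          rw [Finset.sum_mul, ← Finset.sum_add_distrib]
          exact Finset.sum_congr rfl fun t _ => by ring
      _ = (∑ s', p a s s' * g s') + D := by rw [hp1]; ring
  calc R s a + β * ∑ s', p a s s' * f s'
      ≤ R s a + β * ((∑ s', p a s s' * g s') + D) := by
        exact add_le_add_right (mul_le_mul_of_nonneg_left h1 hβ) _
    _ = (R s a + β * ∑ s', p a s s' * g s') + β * D := by ring
    _ ≤ _ := add_le_add_left
        (Finset.le_sup' (fun a => R s a + β * ∑ s', p a s s' * g s')
          (Finset.mem_univ a)) _

lemma bellman_monotone {S A : Type*} [Fintype S] [LinearOrder S]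
    [Fintype A] [Nonempty A]
    (R : S → A → ℝ) (β : ℝ) (hβ : 0 ≤ β) (p : A → S → S → ℝ)
    (hR : ∀ a, Monotone fun s => R s a)
    (hmono : ∀ a : A, ∀ f : S → ℝ, Monotone f → ∀ s s'' : S, s'' ≤ s →
      ∑ s', p a s'' s' * f s' ≤ ∑ s', p a s s' * f s')
    (f : S → ℝ) (hf : Monotone f) : Monotone (bellman R β p f) := by
  intro s'' s h
  unfold bellman
  apply Finset.sup'_le
  intro a _
  calc R s'' a + β * ∑ s', p a s'' s' * f s'
      ≤ R s a + β * ∑ s', p a s s' * f s' :=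
        add_le_add (hR a h) (mul_le_mul_of_nonneg_left (hmono a f hf s s'' h) hβ)
    _ ≤ _ := Finset.le_sup' (fun a => R s a + β * ∑ s', p a s s' * f s')
        (Finset.mem_univ a)

/-- the unique fixed point of the Bellman operator with rewards
non-decreasing in the state and stochastically monotone kernels is itself a
non-decreasing function of the state. -/
theorem fixed_point_monotone {S A : Type*} [Fintype S] [LinearOrder S]
    [Fintype A] [Nonempty A]
    (R : S → A → ℝ) (β : ℝ) (hβ0 : 0 < β) (hβ1 : β < 1)
    (p : A → S → S → ℝ)
    (hp0 : ∀ a s s', 0 ≤ p a s s') (hp1 : ∀ a s, ∑ s', p a s s' = 1)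
    (hR : ∀ a, Monotone fun s => R s a)
    (hmono : ∀ a : A, ∀ f : S → ℝ, Monotone f → ∀ s s'' : S, s'' ≤ s →
      ∑ s', p a s'' s' * f s' ≤ ∑ s', p a s s' * f s')
    (Vstar : S → ℝ) (hfix : bellman R β p Vstar = Vstar) :
    Monotone Vstar := by
  intro s'' s hss
  set f : ℕ → S → ℝ := fun n => (bellman R β p)^[n] (fun _ => 0) with hfdef
  have hf0 : f 0 = fun _ => 0 := rfl
  have hfsucc : ∀ n, f (n + 1) = bellman R β p (f n) := by
    intro n
    simp [hfdef, Function.iterate_succ_apply']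
  -- each iterate is monotone
  have hfmono : ∀ n, Monotone (f n) := by
    intro n
    induction n with
    | zero => exact monotone_const
    | succ n ih =>
        rw [hfsucc]
        exact bellman_monotone R β hβ0.le p hR hmono (f n) ih
  -- bound on distance to Vstar
  set D0 : ℝ := Finset.univ.sup' ⟨s, Finset.mem_univ s⟩ (fun t => |Vstar t|) with hD0
  have hbound : ∀ n, (∀ t, f n t ≤ Vstar t + β ^ n * D0) ∧
      (∀ t, Vstar t ≤ f n t + β ^ n * D0) := by
    intro n
    induction n with
    | zero =>
        constructor <;> intro t <;>
        · have h1 : |Vstar t| ≤ D0 := Finset.le_sup' (fun t => |Vstar t|) (Finset.mem_univ t)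
          have h2 := abs_le.mp h1
          simp [hf0]
          linarith [h2.1, h2.2]
    | succ n ih =>
        have hV : bellman R β p Vstar = Vstar := hfix
        constructor <;> intro t
        · have := bellman_le_of_le R β hβ0.le p hp0 hp1 (f n) Vstar
            (β ^ n * D0) ih.1 t
          rw [← hfsucc, hV] at this
          calc f (n + 1) t ≤ Vstar t + β * (β ^ n * D0) := this
            _ = Vstar t + β ^ (n + 1) * D0 := by ring
        · have := bellman_le_of_le R β hβ0.le p hp0 hp1 Vstar (f n)
            (β ^ n * D0) ih.2 t
          rw [← hfsucc, hV] at this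
          calc Vstar t ≤ f (n + 1) t + β * (β ^ n * D0) := this
            _ = f (n + 1) t + β ^ (n + 1) * D0 := by ring
  -- key inequality for every n
  have hkey : ∀ n, Vstar s'' ≤ Vstar s + 2 * β ^ n * D0 := by
    intro n
    have h1 := (hbound n).2 s''
    have h2 := hfmono n hss
    have h3 := (hbound n).1 s
    linarith
  -- take the limit
  have htend : Filter.Tendsto (fun n : ℕ => Vstar s + 2 * β ^ n * D0)
      Filter.atTop (nhds (Vstar s)) := by
    have hpow : Filter.Tendsto (fun n : ℕ => β ^ n) Filter.atTop (nhds 0) :=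
      tendsto_pow_atTop_nhds_zero_of_lt_one hβ0.le hβ1
    have : Filter.Tendsto (fun n : ℕ => Vstar s + 2 * β ^ n * D0)
        Filter.atTop (nhds (Vstar s + 2 * 0 * D0)) := by
      exact Filter.Tendsto.const_add _ (((hpow.const_mul 2)).mul_const D0)
    simpa using this
  exact ge_of_tendsto' htend hkey
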